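/- For the embedded chain P of the M/G/1 queue with parameter z > 1, the quantities H_m^{(i)} satisfy H_m^{(i)} = 1/(z·(z−1)^{i−m}) for all 1 ≤ m < i, and P_0^{(k+)} = z^{−k} for all k ≥ 1. -/

import Mathlib

open scoped ENNReal
open Filter Topology

/-- Matrix powers of a nonnegative kernel on ℕ, values in `[0,∞]`. -/
noncomputable def matPow (P : ℕ → ℕ → ℝ≥0∞) : ℕ → ℕ → ℕ → ℝ≥0∞
  | 0, i, j => if i = j then 1 else 0
  | k + 1, i, j => ∑' l : ℕ, matPow P k i l * P l j

/-- The potential `φ(i) = ∑_{k=0}^∞ ∑_j P^k(i,j) c(j)`. -/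
noncomputable def potential (P : ℕ → ℕ → ℝ≥0∞) (c : ℕ → ℝ≥0∞) (i : ℕ) : ℝ≥0∞ :=
  ∑' k : ℕ, ∑' j : ℕ, matPow P k i j * c j

/-- The Green matrix `G(i,j) = ∑_{k=0}^∞ P^k(i,j)`. -/
noncomputable def green (P : ℕ → ℕ → ℝ≥0∞) (i j : ℕ) : ℝ≥0∞ :=
  ∑' k : ℕ, matPow P k i j

/-- `P_m^{(k+)} = ∑_{i=k}^∞ P(m,i)`. -/
noncomputable def Pplus (P : ℕ → ℕ → ℝ≥0∞) (m k : ℕ) : ℝ≥0∞ :=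
  ∑' l : ℕ, P m (k + l)

/-- `H P i m = H_m^{(i)}`: `H_i^{(i)} = 1` and
`H_m^{(i)} = (1/P(m,m-1)) ∑_{k=m+1}^{i} P_m^{(k+)} H_k^{(i)}` for `1 ≤ m < i`. -/
noncomputable def H (P : ℕ → ℕ → ℝ≥0∞) (i : ℕ) : ℕ → ℝ≥0∞
  | m =>
    if i ≤ m then 1
    else (P m (m - 1))⁻¹ *
      ∑ k ∈ (Finset.Ioc m i).attach, Pplus P m k.1 * H P i k.1
  termination_by m => i - m
  decreasing_by
    have h := Finset.mem_Ioc.mp k.2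
    omega

/-- The ratio `r_n(i) = (∑_{m=i+1}^n H_m^{(n)}) / (∑_{k=1}^n P_0^{(k+)} H_k^{(n)})`. -/
noncomputable def ratio (P : ℕ → ℕ → ℝ≥0∞) (i n : ℕ) : ℝ :=
  (∑ m ∈ Finset.Icc (i + 1) n, (H P n m).toReal) /
    (∑ k ∈ Finset.Icc 1 n, (Pplus P 0 k).toReal * (H P n k).toReal)

/-- The embedded chain of the `M/G/1` queue with parameter `z`:
`P(0,j) = a_j = (z-1)/z^(j+1)`, and for `i ≥ 1`, `P(i,j) = a_{j-i+1} = (z-1)/z^(j-i+2)`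
for `j ≥ i-1` and `P(i,j) = 0` for `j < i-1`. -/
noncomputable def mG1 (z : ℝ) : ℕ → ℕ → ℝ≥0∞ := fun i j =>
  if i = 0 then ENNReal.ofReal ((z - 1) / z ^ (j + 1))
  else if i - 1 ≤ j then ENNReal.ofReal ((z - 1) / z ^ (j - (i - 1) + 1))
  else 0

section mG1aux

lemma H_eq' (P : ℕ → ℕ → ℝ≥0∞) (i m : ℕ) : H P i m =
    if i ≤ m then 1
    else (P m (m - 1))⁻¹ * ∑ k ∈ Finset.Ioc m i, Pplus P m k * H P i k := by
  rw [H]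
  split
  · rfl
  · rw [Finset.sum_attach (Finset.Ioc m i) (fun k => Pplus P m k * H P i k)]

lemma geom_ofReal (z : ℝ) (hz : 1 < z) (c : ℝ) (hc : 0 ≤ c) :
    ∑' l : ℕ, ENNReal.ofReal (c * (1/z)^l) = ENNReal.ofReal (c * (z/(z-1))) := by
  have hz0 : (0:ℝ) < z := lt_trans one_pos hz
  have hz1 : (0:ℝ) < z - 1 := by linarith
  have hrpos : (0:ℝ) < 1 - 1/z := by
    rw [sub_pos, div_lt_one hz0]; exact hz
  have key : ∀ l : ℕ, ENNReal.ofReal (c * (1/z)^l)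
      = ENNReal.ofReal c * (ENNReal.ofReal (1/z))^l := by
    intro l
    rw [ENNReal.ofReal_mul hc, ENNReal.ofReal_pow (by positivity)]
  simp only [key]
  rw [ENNReal.tsum_mul_left, ENNReal.tsum_geometric]
  have h1 : (1 : ℝ≥0∞) - ENNReal.ofReal (1/z) = ENNReal.ofReal (1 - 1/z) := by
    rw [ENNReal.ofReal_sub _ (by positivity), ENNReal.ofReal_one]
  rw [h1, ← ENNReal.ofReal_inv_of_pos hrpos, ← ENNReal.ofReal_mul hc]
  congr 1
  field_simp

lemma Pplus_zero' (z : ℝ) (hz : 1 < z) (k : ℕ) :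
    Pplus (mG1 z) 0 k = ENNReal.ofReal (1 / z ^ k) := by
  have hz0 : (0:ℝ) < z := lt_trans one_pos hz
  have hz1 : (0:ℝ) < z - 1 := by linarith
  unfold Pplus
  have key : ∀ l : ℕ, mG1 z 0 (k + l)
      = ENNReal.ofReal ((z-1)/z^(k+1) * (1/z)^l) := by
    intro l
    have e1 : mG1 z 0 (k+l) = ENNReal.ofReal ((z-1)/z^(k+l+1)) := by simp [mG1]
    rw [e1]
    congr 1
    rw [div_pow, one_pow, div_mul_div_comm, mul_one,
      show k + l + 1 = (k+1)+l from by omega, pow_add]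
  simp only [key]
  rw [geom_ofReal z hz _ (by positivity)]
  congr 1
  field_simp
  ring

lemma Pplus_pos' (z : ℝ) (hz : 1 < z) (m k : ℕ) (hm : 1 ≤ m) (hk : m ≤ k) :
    Pplus (mG1 z) m k = ENNReal.ofReal (1 / z ^ (k - m + 1)) := by
  have hz0 : (0:ℝ) < z := lt_trans one_pos hz
  have hz1 : (0:ℝ) < z - 1 := by linarith
  unfold Pplus
  have key : ∀ l : ℕ, mG1 z m (k + l)
      = ENNReal.ofReal ((z-1)/z^(k-m+2) * (1/z)^l) := by
    intro l
    have e1 : mG1 z m (k+l) = ENNReal.ofReal ((z-1)/z^(k + l - (m-1) + 1)) := by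
      simp only [mG1, if_neg (by omega : ¬ m = 0), if_pos (by omega : m - 1 ≤ k + l)]
    rw [e1]
    congr 1
    rw [div_pow, one_pow, div_mul_div_comm, mul_one,
      show k + l - (m-1) + 1 = (k-m+2)+l from by omega, pow_add]
  simp only [key]
  rw [geom_ofReal z hz _ (by positivity)]
  congr 1
  rw [show k - m + 2 = (k - m + 1) + 1 from by omega, pow_succ]
  field_simp

lemma mG1_diag (z : ℝ) (m : ℕ) (hm : 1 ≤ m) :
    mG1 z m (m - 1) = ENNReal.ofReal ((z-1)/z) := by
  simp only [mG1, if_neg (by omega : ¬ m = 0), if_pos (le_refl (m-1)),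
    Nat.sub_self, zero_add, pow_one]

lemma H_formula (z : ℝ) (hz : 1 < z) :
    ∀ d, 1 ≤ d → ∀ m, 1 ≤ m →
      H (mG1 z) (m + d) m = ENNReal.ofReal (1 / (z * (z - 1) ^ d)) := by
  have hz0 : (0:ℝ) < z := lt_trans one_pos hz
  have hz1 : (0:ℝ) < z - 1 := by linarith
  have ha0pos : (0:ℝ) < (z-1)/z := by positivity
  intro d hd
  induction d, hd using Nat.le_induction with
  | base =>
    intro m hm
    rw [H_eq', if_neg (by omega), Nat.Ioc_succ_singleton, Finset.sum_singleton,
      H_eq', if_pos (le_refl _), mul_one, mG1_diag z m hm,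
      Pplus_pos' z hz m (m+1) hm (by omega),
      show m + 1 - m + 1 = 2 from by omega,
      ← ENNReal.ofReal_inv_of_pos ha0pos, ← ENNReal.ofReal_mul (by positivity)]
    congr 1
    rw [pow_one]
    field_simp
  | succ d hd IH =>
    intro m hm
    have hval := IH (m+1) (by omega)
    rw [show m + 1 + d = m + (d+1) from by omega] at hval
    have hS : ∑ k ∈ Finset.Ioc (m+1) (m + (d+1)),
          Pplus (mG1 z) (m+1) k * H (mG1 z) (m + (d+1)) k
        = ENNReal.ofReal ((z-1)/z) * ENNReal.ofReal (1 / (z * (z - 1) ^ d)) := by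
      have h2 := H_eq' (mG1 z) (m + (d+1)) (m+1)
      rw [if_neg (by omega), hval, mG1_diag z (m+1) (by omega)] at h2
      rw [h2, ← mul_assoc,
        ENNReal.mul_inv_cancel (ENNReal.ofReal_pos.mpr ha0pos).ne' ENNReal.ofReal_ne_top,
        one_mul]
    rw [H_eq', if_neg (by omega : ¬ m + (d+1) ≤ m), mG1_diag z m hm]
    have hsplit : Finset.Ioc m (m + (d+1))
        = Finset.cons (m+1) (Finset.Ioc (m+1) (m + (d+1))) (by simp) := by
      rw [← Finset.Icc_eq_cons_Ioc (by omega), Finset.Icc_add_one_left_eq_Ioc]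
    rw [hsplit, Finset.sum_cons]
    have hterm : ∀ k ∈ Finset.Ioc (m+1) (m + (d+1)),
        Pplus (mG1 z) m k * H (mG1 z) (m + (d+1)) k
        = ENNReal.ofReal (1/z) * (Pplus (mG1 z) (m+1) k * H (mG1 z) (m + (d+1)) k) := by
      intro k hk
      have hk' := Finset.mem_Ioc.mp hk
      rw [Pplus_pos' z hz m k hm (by omega), Pplus_pos' z hz (m+1) k (by omega) (by omega),
        ← mul_assoc, ← ENNReal.ofReal_mul (by positivity)]
      congr 2
      rw [show k - m + 1 = (k - (m+1) + 1) + 1 from by omega, pow_succ]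
      field_simp
    rw [Finset.sum_congr rfl hterm, ← Finset.mul_sum, hS,
      Pplus_pos' z hz m (m+1) hm (by omega), show m+1-m+1 = 2 from by omega, hval,
      ← ENNReal.ofReal_inv_of_pos ha0pos]
    rw [← ENNReal.ofReal_mul (by positivity), ← ENNReal.ofReal_mul (by positivity),
      ← ENNReal.ofReal_mul (by positivity), ← ENNReal.ofReal_add (by positivity) (by positivity),
      ← ENNReal.ofReal_mul (by positivity)]
    congr 1
    rw [pow_succ]
    field_simp
    ring

end mG1aux

theorem mG1_H_and_Pplus_formula (z : ℝ) (hz : 1 < z) :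
    (∀ m i : ℕ, 1 ≤ m → m < i →
      H (mG1 z) i m = ENNReal.ofReal (1 / (z * (z - 1) ^ (i - m)))) ∧
    (∀ k : ℕ, 1 ≤ k → Pplus (mG1 z) 0 k = ENNReal.ofReal (1 / z ^ k)) := by
  constructor
  · intro m i hm hmi
    obtain ⟨d, rfl⟩ : ∃ d, i = m + d := ⟨i - m, by omega⟩
    rw [show m + d - m = d from by omega]
    exact H_formula z hz d (by omega) m hm
  · intro k _
    exact Pplus_zero' z hz k
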